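/- arXiv:2102.10396 — 3 statements merged into one kernel-verified Lean document; each statement's English description precedes it below -/
import Mathlib

section
/- The function X ↦ log det(I + H X Hᴴ) is concave on the set of positive semidefinite Hermitian matrices X. -/
open Matrix ComplexOrder

open Finset in
private lemma posDef_conj_aux {k : ℕ} {B N : Matrix (Fin k) (Fin k) ℂ} (hB : B.PosDef)
    (hN : IsUnit N) : (Nᴴ * B * N).PosDef := by
  refine .of_dotProduct_mulVec_pos (isHermitian_conjTranspose_mul_mul N hB.1) fun x hx => ?_
  have hNx : N *ᵥ x ≠ 0 := by
    have hinj := Matrix.mulVec_injective_iff_isUnit.mpr hN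
    intro h
    exact hx (hinj (by simpa using h))
  simpa only [star_mulVec, dotProduct_mulVec, vecMul_vecMul] using hB.dotProduct_mulVec_pos hNx

open scoped MatrixOrder in
open Finset in
private lemma logdet_concave_aux {k : ℕ} {A B : Matrix (Fin k) (Fin k) ℂ}
    (hA : A.PosDef) (hB : B.PosDef) (a b : ℝ) (ha : 0 ≤ a) (hb : 0 ≤ b) (hab : a + b = 1) :
    a * Real.log (A.det.re) + b * Real.log (B.det.re)
      ≤ Real.log (((a : ℂ) • A + (b : ℂ) • B).det.re) := by
  classical
  -- square root of A
  set S : Matrix (Fin k) (Fin k) ℂ := CFC.sqrt A with hSdef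
  have hSS : S * S = A := CFC.sqrt_mul_sqrt_self A hA.posSemidef.nonneg
  have hdetA : (0 : ℂ) < A.det := hA.det_pos
  have hdetS : S.det ≠ 0 := by
    intro h
    have : A.det = 0 := by rw [← hSS, det_mul, h, mul_zero]
    exact hdetA.ne' this
  have hSunit : IsUnit S := (isUnit_iff_isUnit_det S).2 hdetS.isUnit
  have hSH : S.IsHermitian := (CFC.sqrt_nonneg A).posSemidef.1
  have hSinv : S * S⁻¹ = 1 := mul_nonsing_inv S hdetS.isUnit
  have hSinv' : S⁻¹ * S = 1 := nonsing_inv_mul S hdetS.isUnit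
  have hTH : (S⁻¹).IsHermitian := hSH.inv
  set C : Matrix (Fin k) (Fin k) ℂ := S⁻¹ * B * S⁻¹ with hCdef
  have hC : C.PosDef := by
    have := posDef_conj_aux hB (hN := Matrix.isUnit_nonsing_inv_iff.mpr hSunit)
    rwa [hTH.eq] at this
  -- B = S * C * S
  have hBC : B = S * C * S := by
    rw [hCdef]
    calc B = (S * S⁻¹) * B * (S⁻¹ * S) := by rw [hSinv, hSinv']; simp
    _ = S * (S⁻¹ * B * S⁻¹) * S := by noncomm_ring
  -- key identity
  have hkey : (a : ℂ) • A + (b : ℂ) • B = S * ((a : ℂ) • 1 + (b : ℂ) • C) * S := by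
    rw [Matrix.mul_add, Matrix.add_mul, Matrix.mul_smul, Matrix.smul_mul,
      Matrix.mul_smul, Matrix.smul_mul, Matrix.mul_one, hSS, ← hBC]
  -- spectral decomposition of C
  set U : Matrix (Fin k) (Fin k) ℂ := (hC.1.eigenvectorUnitary : Matrix (Fin k) (Fin k) ℂ) with hUdef
  set lam : Fin k → ℝ := hC.1.eigenvalues with hlamdef
  have hspec : C = U * diagonal (RCLike.ofReal ∘ lam) * star U := hC.1.spectral_theorem
  have hUU : U * star U = 1 := Matrix.mem_unitaryGroup_iff.mp hC.1.eigenvectorUnitary.2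
  have hdiag : (a : ℂ) • 1 + (b : ℂ) • C
      = U * diagonal (fun i => (a : ℂ) + (b : ℂ) * lam i) * star U := by
    have h1 : (1 : Matrix (Fin k) (Fin k) ℂ) = U * 1 * star U := by
      rw [Matrix.mul_one, hUU]
    have hconj : ∀ (c : ℂ) (D : Matrix (Fin k) (Fin k) ℂ),
        c • (U * D * star U) = U * (c • D) * star U := by
      intro c D
      rw [Matrix.mul_smul, Matrix.smul_mul]
    rw [hspec]
    nth_rewrite 1 [h1]
    rw [hconj, hconj, ← Matrix.add_mul, ← Matrix.mul_add]
    congr 2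
    ext i j
    by_cases h : i = j <;>
      simp [Matrix.diagonal_apply, h, Matrix.one_apply, smul_eq_mul]
  have hdetdiag : ((a : ℂ) • 1 + (b : ℂ) • C).det = ∏ i, ((a : ℂ) + (b : ℂ) * lam i) := by
    rw [hdiag, det_mul_right_comm, hUU, Matrix.one_mul, det_diagonal]
  have hdetCprod : C.det = ∏ i, (lam i : ℂ) := hC.1.det_eq_prod_eigenvalues
  have hlampos : ∀ i, 0 < lam i := hC.eigenvalues_pos
  -- determinants as real numbers
  set P : ℝ := A.det.re with hPdef
  have h0 := Complex.lt_def.mp hdetA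
  have hdetAre : A.det = (P : ℂ) := by
    apply Complex.ext <;> simp [hPdef, ← h0.2]
  have hPpos : 0 < P := by simpa [hPdef] using h0.1
  have hdetB : B.det = ((P * ∏ i, lam i : ℝ) : ℂ) := by
    rw [hBC, det_mul_right_comm, hSS, det_mul, hdetAre, hdetCprod]
    push_cast
    ring
  have hdetMix : ((a : ℂ) • A + (b : ℂ) • B).det
      = ((P * ∏ i, (a + b * lam i) : ℝ) : ℂ) := by
    rw [hkey, det_mul_right_comm, hSS, det_mul, hdetAre, hdetdiag]
    push_cast
    ring
  rw [hdetB, hdetMix, Complex.ofReal_re, Complex.ofReal_re]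
  have hprodlam : 0 < ∏ i, lam i := Finset.prod_pos fun i _ => hlampos i
  have habl : ∀ i : Fin k, 0 < a + b * lam i := fun i => by
    rcases lt_or_ge 0 a with h | h
    · nlinarith [hlampos i, mul_nonneg hb (hlampos i).le]
    · have haz : a = 0 := le_antisymm h ha
      have hbz : b = 1 := by linarith
      simpa [haz, hbz] using hlampos i
  have hprodmix : 0 < ∏ i, (a + b * lam i) := Finset.prod_pos fun i _ => habl i
  rw [Real.log_mul hPpos.ne' hprodlam.ne', Real.log_mul hPpos.ne' hprodmix.ne',
    Real.log_prod (fun i _ => (hlampos i).ne'),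
    Real.log_prod (fun i _ => (habl i).ne')]
  have hsum : ∑ i, b * Real.log (lam i) ≤ ∑ i, Real.log (a + b * lam i) := by
    refine Finset.sum_le_sum fun i _ => ?_
    have hg : lam i ^ b ≤ a + b * lam i := by
      have := Real.geom_mean_le_arith_mean2_weighted ha hb zero_le_one (hlampos i).le hab
      simpa [mul_comm] using this
    calc b * Real.log (lam i) = Real.log (lam i ^ b) := (Real.log_rpow (hlampos i) b).symm
      _ ≤ Real.log (a + b * lam i) :=
        Real.log_le_log (Real.rpow_pos_of_pos (hlampos i) b) hg
  calc a * Real.log P + b * (Real.log P + ∑ i, Real.log (lam i))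
      = Real.log P + ∑ i, b * Real.log (lam i) := by
        rw [← Finset.mul_sum]; linear_combination Real.log P * hab
    _ ≤ Real.log P + ∑ i, Real.log (a + b * lam i) := by linarith [hsum]

/-- The function `X ↦ log det (I + H X Hᴴ)` is concave on the set of positive
semidefinite Hermitian matrices. -/
theorem logdet_rate_concave {m n : ℕ} (H : Matrix (Fin m) (Fin n) ℂ)
    (X Y : Matrix (Fin n) (Fin n) ℂ) (hX : X.PosSemidef) (hY : Y.PosSemidef)
    (a b : ℝ) (ha : 0 ≤ a) (hb : 0 ≤ b) (hab : a + b = 1) :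
    a * Real.log ((1 + H * X * Hᴴ).det.re) + b * Real.log ((1 + H * Y * Hᴴ).det.re)
      ≤ Real.log ((1 + H * ((a : ℂ) • X + (b : ℂ) • Y) * Hᴴ).det.re) := by
  have hA : (1 + H * X * Hᴴ).PosDef :=
    Matrix.PosDef.add_posSemidef Matrix.PosDef.one (hX.mul_mul_conjTranspose_same H)
  have hB : (1 + H * Y * Hᴴ).PosDef :=
    Matrix.PosDef.add_posSemidef Matrix.PosDef.one (hY.mul_mul_conjTranspose_same H)
  have hsum : (1 : ℂ) = (a : ℂ) + (b : ℂ) := by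
    rw [← Complex.ofReal_add, hab, Complex.ofReal_one]
  have hmix : 1 + H * ((a : ℂ) • X + (b : ℂ) • Y) * Hᴴ
      = (a : ℂ) • (1 + H * X * Hᴴ) + (b : ℂ) • (1 + H * Y * Hᴴ) := by
    rw [Matrix.mul_add, Matrix.add_mul, Matrix.mul_smul, Matrix.smul_mul,
      Matrix.mul_smul, Matrix.smul_mul, smul_add, smul_add, ← add_assoc]
    rw [show (a:ℂ) • (1 : Matrix (Fin m) (Fin m) ℂ) + (a:ℂ) • (H * X * Hᴴ)
        + ((b:ℂ) • 1 + (b:ℂ) • (H * Y * Hᴴ))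
        = ((a:ℂ) + (b:ℂ)) • (1 : Matrix (Fin m) (Fin m) ℂ)
          + ((a:ℂ) • (H * X * Hᴴ) + (b:ℂ) • (H * Y * Hᴴ)) by
      rw [add_smul]; abel]
    rw [← hsum, one_smul, add_assoc]
  rw [hmix]
  exact logdet_concave_aux hA hB a b ha hb hab
end

section
/- If H_bᴴ H_b ⪰ H_eᴴ H_e (i.e., H_bᴴH_b − H_eᴴH_e is positive semidefinite), then for every positive semidefinite X one has log det(I + H_b X H_bᴴ) ≥ log det(I + H_e X H_eᴴ); i.e., the secrecy rate is nonnegative in the degraded case. -/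
open Matrix ComplexOrder
open scoped MatrixOrder

/-- For PSD `P`, `det (1 + P)` has real part at least `1`. -/
lemma one_le_det_re_one_add {n : Type*} [Fintype n] [DecidableEq n]
    {P : Matrix n n ℂ} (hP : P.PosSemidef) : 1 ≤ ((1 + P).det).re := by
  have hH : (1 + P).IsHermitian := Matrix.isHermitian_one.add hP.1
  have hev : ∀ i, 1 ≤ hH.eigenvalues i := by
    intro i
    rw [hH.eigenvalues_eq]
    set v := ⇑(hH.eigenvectorBasis i) with hv
    have h1 : star v ⬝ᵥ ((1 + P) *ᵥ v) = star v ⬝ᵥ v + star v ⬝ᵥ (P *ᵥ v) := by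
      rw [Matrix.add_mulVec, Matrix.one_mulVec, dotProduct_add]
    rw [h1, map_add]
    have h2 : (RCLike.re (star v ⬝ᵥ v) : ℝ) = 1 := by
      rw [hv, dotProduct_comm, ← EuclideanSpace.inner_eq_star_dotProduct, inner_self_eq_norm_sq_to_K]
      simp [hH.eigenvectorBasis.orthonormal.1 i]
    have h3 : (0:ℝ) ≤ RCLike.re (star v ⬝ᵥ (P *ᵥ v)) := hP.re_dotProduct_nonneg v
    linarith
  have hdet := hH.det_eq_prod_eigenvalues
  have : ((1 + P).det).re = ∏ i, hH.eigenvalues i := by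
    rw [hdet]
    norm_cast
  rw [this]
  calc (1:ℝ) = ∏ _i : n, 1 := by simp
    _ ≤ ∏ i, hH.eigenvalues i :=
        Finset.prod_le_prod (fun i _ => by norm_num) (fun i _ => hev i)

/-- Monotonicity of the (real part of the) determinant under adding a PSD matrix
to a positive definite one. -/
lemma det_re_le_det_re_add {n : Type*} [Fintype n] [DecidableEq n]
    {A D : Matrix n n ℂ} (hA : A.PosDef) (hD : D.PosSemidef) :
    A.det.re ≤ (A + D).det.re := by
  set R := CFC.sqrt A with hRdef
  have hR : R.PosSemidef := (CFC.sqrt_nonneg A).posSemidef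
  have hRR : R * R = A := CFC.sqrt_mul_sqrt_self A hA.posSemidef.nonneg
  have hdetA : 0 < A.det := hA.det_pos
  have hdetR : R.det ≠ 0 := by
    intro h
    have : A.det = 0 := by rw [← hRR, Matrix.det_mul, h, mul_zero]
    exact hdetA.ne' this
  have hRinv : R * R⁻¹ = 1 := Matrix.mul_nonsing_inv R (isUnit_iff_ne_zero.mpr hdetR)
  have hinvR : R⁻¹ * R = 1 := Matrix.nonsing_inv_mul R (isUnit_iff_ne_zero.mpr hdetR)
  set P := R⁻¹ * D * R⁻¹ with hPdef
  have hP : P.PosSemidef := by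
    have := hD.conjTranspose_mul_mul_same R⁻¹
    rwa [hR.1.inv] at this
  have hAD : A + D = R * (1 + P) * R := by
    rw [Matrix.mul_add, Matrix.mul_one, Matrix.add_mul, hRR, hPdef]
    congr 1
    rw [← Matrix.mul_assoc, ← Matrix.mul_assoc, hRinv]
    rw [Matrix.mul_assoc, Matrix.mul_assoc, hinvR, Matrix.mul_one, Matrix.one_mul]
  have hdet : (A + D).det = A.det * (1 + P).det := by
    rw [hAD, Matrix.det_mul, Matrix.det_mul, mul_comm, ← mul_assoc, ← Matrix.det_mul, hRR]
  have hAim : A.det.im = 0 := by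
    have := (Complex.lt_def.mp hdetA).2
    simpa using this.symm
  have hAre : 0 < A.det.re := by simpa using (Complex.lt_def.mp hdetA).1
  have h1P : 1 ≤ ((1 + P).det).re := one_le_det_re_one_add hP
  have : (A + D).det.re = A.det.re * ((1 + P).det).re := by
    rw [hdet, Complex.mul_re, hAim, zero_mul, sub_zero]
  rw [this]
  exact le_mul_of_one_le_right hAre.le h1P

private lemma det_one_add_key {m n : ℕ} (H : Matrix (Fin m) (Fin n) ℂ)
    {X : Matrix (Fin n) (Fin n) ℂ} (hX : X.PosSemidef) :
    (1 + H * X * Hᴴ).det = (1 + CFC.sqrt X * (Hᴴ * H) * CFC.sqrt X).det := by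
  set S := CFC.sqrt X with hSdef
  have hSS : S * S = X := CFC.sqrt_mul_sqrt_self X hX.nonneg
  have hSH : Sᴴ = S := (CFC.sqrt_nonneg X).posSemidef.1
  have h1 : H * X * Hᴴ = (H * S) * (S * Hᴴ) := by
    rw [← hSS, Matrix.mul_assoc, Matrix.mul_assoc, Matrix.mul_assoc]
  rw [h1, Matrix.det_one_add_mul_comm]
  congr 2
  simp [Matrix.mul_assoc]

/-- In the degraded case `H_bᴴ H_b ⪰ H_eᴴ H_e`, the secrecy rate is nonnegative:
`log det (I + H_b X H_bᴴ) ≥ log det (I + H_e X H_eᴴ)` for every PSD `X`. -/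
theorem secrecy_rate_nonneg_of_degraded {Nr Ne Nt : ℕ}
    (Hb : Matrix (Fin Nr) (Fin Nt) ℂ) (He : Matrix (Fin Ne) (Fin Nt) ℂ)
    (hdeg : (Hbᴴ * Hb - Heᴴ * He).PosSemidef) :
    ∀ X : Matrix (Fin Nt) (Fin Nt) ℂ, X.PosSemidef →
      Real.log ((1 + He * X * Heᴴ).det.re) ≤ Real.log ((1 + Hb * X * Hbᴴ).det.re) := by
  intro X hX
  set S := CFC.sqrt X with hSdef
  have hS : S.PosSemidef := (CFC.sqrt_nonneg X).posSemidef
  have hSH : Sᴴ = S := hS.1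
  have hE := det_one_add_key He hX
  have hB := det_one_add_key Hb hX
  rw [← hSdef] at hE hB
  set A : Matrix (Fin Nt) (Fin Nt) ℂ := 1 + S * (Heᴴ * He) * S with hAdef
  set D : Matrix (Fin Nt) (Fin Nt) ℂ := S * (Hbᴴ * Hb - Heᴴ * He) * S with hDdef
  have hApsd : (S * (Heᴴ * He) * S).PosSemidef := by
    have := (Matrix.posSemidef_conjTranspose_mul_self He).conjTranspose_mul_mul_same S
    rwa [hSH] at this
  have hA : A.PosDef := Matrix.PosDef.one.add_posSemidef hApsd
  have hD : D.PosSemidef := by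
    have := hdeg.conjTranspose_mul_mul_same S
    rwa [hSH] at this
  have hAD : A + D = 1 + S * (Hbᴴ * Hb) * S := by
    rw [hAdef, hDdef, Matrix.mul_sub, Matrix.sub_mul]
    abel
  have hmain : A.det.re ≤ (A + D).det.re := det_re_le_det_re_add hA hD
  have hpos : 0 < A.det.re := by simpa using (Complex.lt_def.mp hA.det_pos).1
  rw [hE, hB, ← hAD]
  exact Real.log_le_log hpos hmain
end

section
/- Water-filling lemma: let Φ̄ be Hermitian positive definite and H a complex matrix, and let Φ̄^{-1/2} Hᴴ H Φ̄^{-1/2} = V Σ Vᴴ be an eigendecomposition with V unitary and Σ = diag(σ₁,…,σ_n) ⪰ 0. Then X* = Φ̄^{-1/2} V Σ̄ Vᴴ Φ̄^{-1/2}, where Σ̄ = diag(max(1−1/σ_i,0)) (zero where σ_i = 0), maximizes L(X) = log det(I + H X Hᴴ) − tr(Φ̄ X) over Hermitian X ⪰ 0. -/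
open Matrix ComplexOrder


lemma psd_diag {n : ℕ} {M : Matrix (Fin n) (Fin n) ℂ} (h : M.PosSemidef) (i : Fin n) :
    0 ≤ M i i := by
  exact h.diag_nonneg

lemma psd_trace_nonneg {n : ℕ} {M : Matrix (Fin n) (Fin n) ℂ} (h : M.PosSemidef) :
    0 ≤ M.trace := by
  rw [Matrix.trace]
  exact Finset.sum_nonneg fun i _ => psd_diag h i

open scoped MatrixOrder in
lemma psd_trace_mul_re_nonneg {n : ℕ} {G X : Matrix (Fin n) (Fin n) ℂ}
    (hG : G.PosSemidef) (hX : X.PosSemidef) : 0 ≤ ((G * X).trace).re := by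
  have h1 : G * X = CFC.sqrt G * (CFC.sqrt G * X) := by
    rw [← mul_assoc, CFC.sqrt_mul_sqrt_self G hG.nonneg]
  have h2 : (G * X).trace = (CFC.sqrt G * X * CFC.sqrt G).trace := by
    rw [h1, Matrix.trace_mul_comm, mul_assoc]
  have h3 : (CFC.sqrt G * X * CFC.sqrt G).PosSemidef := by
    have := hX.mul_mul_conjTranspose_same (CFC.sqrt G)
    rwa [(CFC.sqrt_nonneg G).posSemidef.1.eq] at this
  have := psd_trace_nonneg h3
  rw [h2]
  exact (Complex.le_def.mp this).1


open scoped MatrixOrder in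
lemma logdet_ineq {n : ℕ} {A B : Matrix (Fin n) (Fin n) ℂ} (hA : A.PosDef) (hB : B.PosDef) :
    Real.log B.det.re ≤ Real.log A.det.re + ((A⁻¹ * (B - A)).trace).re := by
  classical
  set S := CFC.sqrt A with hSdef
  have hS : S * S = A := CFC.sqrt_mul_sqrt_self A hA.posSemidef.nonneg
  have hSH : S.IsHermitian := (CFC.sqrt_nonneg A).posSemidef.1
  -- determinants
  have hdetA : 0 < A.det := hA.det_pos
  have hdetApos : 0 < A.det.re := (Complex.lt_def.mp hdetA).1
  have hdetAim : A.det.im = 0 := ((Complex.lt_def.mp hdetA).2).symm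
  have hdetB : 0 < B.det := hB.det_pos
  have hdetBpos : 0 < B.det.re := (Complex.lt_def.mp hdetB).1
  have hdetBim : B.det.im = 0 := ((Complex.lt_def.mp hdetB).2).symm
  have hdetSne : IsUnit S.det := by
    have : S.det * S.det = A.det := by rw [← det_mul, hS]
    have h2 : S.det ≠ 0 := by
      intro h
      rw [h, mul_zero] at this
      exact hdetA.ne' this.symm
    exact h2.isUnit
  -- M
  set M := S⁻¹ * B * S⁻¹ with hMdef
  have hSinvH : (S⁻¹).IsHermitian := hSH.inv
  have hMpsd : M.PosSemidef := by
    have := hB.posSemidef.conjTranspose_mul_mul_same S⁻¹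
    rwa [hSinvH.eq] at this
  have hdetM : M.det = B.det / A.det := by
    rw [hMdef, det_mul, det_mul, det_nonsing_inv, ← hS, det_mul, Ring.inverse_eq_inv]
    field_simp
  set mu := hMpsd.1.eigenvalues with hmu
  have hmu_nonneg : ∀ i, 0 ≤ mu i := hMpsd.eigenvalues_nonneg
  have hdetMprod : M.det = ∏ i, (mu i : ℂ) := hMpsd.1.det_eq_prod_eigenvalues
  have htrM : M.trace = ∑ i, (mu i : ℂ) := by
    exact hMpsd.1.trace_eq_sum_eigenvalues
  -- real products
  have hcast : (∏ i, (mu i : ℂ)) = ((∏ i, mu i : ℝ) : ℂ) := by push_cast; ring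
  have hBA : B.det.re = A.det.re * ∏ i, mu i := by
    have h : B.det = A.det * M.det := by rw [hdetM]; field_simp
    rw [h, hdetMprod, hcast, Complex.mul_re, Complex.ofReal_re, Complex.ofReal_im]
    simp
  have hprodpos : 0 < ∏ i, mu i := by
    have h1 : (0:ℝ) < A.det.re * ∏ i, mu i := hBA ▸ hdetBpos
    nlinarith [hdetApos]
  have hmupos : ∀ i, 0 < mu i := by
    intro i
    rcases lt_or_eq_of_le (hmu_nonneg i) with h | h
    · exact h
    · exfalso
      have : ∏ j, mu j = 0 := Finset.prod_eq_zero (Finset.mem_univ i) h.symm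
      rw [this] at hprodpos; exact lt_irrefl 0 hprodpos
  -- trace identities
  have hAinv : A⁻¹ = S⁻¹ * S⁻¹ := by rw [← hS, Matrix.mul_inv_rev]
  have htrAinvB : (A⁻¹ * B).trace = M.trace := by
    rw [hAinv, hMdef, Matrix.mul_assoc, trace_mul_comm, Matrix.mul_assoc]
  have hAinvA : A⁻¹ * A = 1 := nonsing_inv_mul A hdetA.ne'.isUnit
  have htr : ((A⁻¹ * (B - A)).trace).re = (∑ i, mu i) - n := by
    rw [Matrix.mul_sub, trace_sub, hAinvA, htrAinvB, htrM, trace_one]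
    push_cast
    simp [Complex.ofReal_sum]
  -- final chain
  rw [hBA, Real.log_mul hdetApos.ne' hprodpos.ne', htr,
    Real.log_prod (fun i _ => (hmupos i).ne')]
  have hsum : ∑ i, Real.log (mu i) ≤ (∑ i, mu i) - n := by
    calc ∑ i, Real.log (mu i) ≤ ∑ i, (mu i - 1) :=
          Finset.sum_le_sum fun i _ => Real.log_le_sub_one_of_pos (hmupos i)
      _ = (∑ i, mu i) - n := by
          rw [Finset.sum_sub_distrib]
          simp
  linarith

/-- Water-filling lemma: let `Φ̄` be Hermitian positive definite with positive
definite square root `R` (`R * R = Φ̄`), and let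
`R⁻¹ Hᴴ H R⁻¹ = V (diagonal σ) Vᴴ` with `V` unitary and `σ i ≥ 0`. Then
`X* = R⁻¹ V Σ̄ Vᴴ R⁻¹`, with `Σ̄ = diagonal (max (1 - 1/σ i) 0)` (zero where
`σ i = 0`), maximizes `L(X) = log det (I + H X Hᴴ) - tr (Φ̄ X)` over PSD `X`. -/
theorem waterfilling_matrix {m n : ℕ} (H : Matrix (Fin m) (Fin n) ℂ)
    (Φ : Matrix (Fin n) (Fin n) ℂ) (hΦ : Φ.PosDef)
    (R : Matrix (Fin n) (Fin n) ℂ) (hR : R.PosDef) (hRR : R * R = Φ)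
    (V : Matrix (Fin n) (Fin n) ℂ) (hV : V ∈ Matrix.unitaryGroup (Fin n) ℂ)
    (σ : Fin n → ℝ) (hσ : ∀ i, 0 ≤ σ i)
    (hEVD : R⁻¹ * (Hᴴ * H) * R⁻¹ = V * Matrix.diagonal (fun i => (σ i : ℂ)) * Vᴴ)
    (Xstar : Matrix (Fin n) (Fin n) ℂ)
    (hXstar : Xstar = R⁻¹ * V *
      Matrix.diagonal (fun i => ((if σ i = 0 then 0 else max (1 - 1 / σ i) 0 : ℝ) : ℂ)) *
      Vᴴ * R⁻¹) :
    ∀ X : Matrix (Fin n) (Fin n) ℂ, X.PosSemidef →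
      Real.log ((1 + H * X * Hᴴ).det.re) - (Φ * X).trace.re ≤
        Real.log ((1 + H * Xstar * Hᴴ).det.re) - (Φ * Xstar).trace.re := by
  have hRH : R.IsHermitian := hR.1
  have hRiH : (R⁻¹).IsHermitian := hRH.inv
  have hRunit : IsUnit R.det := hR.det_pos.ne'.isUnit
  have hRiR : R⁻¹ * R = 1 := nonsing_inv_mul R hRunit
  have hRRi : R * R⁻¹ = 1 := mul_nonsing_inv R hRunit
  have hVhV : Vᴴ * V = 1 := by
    have := (Matrix.mem_unitaryGroup_iff'.mp hV)
    rwa [Matrix.star_eq_conjTranspose] at this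
  have hVVh : V * Vᴴ = 1 := by
    have := (Matrix.mem_unitaryGroup_iff.mp hV)
    rwa [Matrix.star_eq_conjTranspose] at this
  set W := H * R⁻¹ * V with hWdef
  have hWc : Wᴴ = Vᴴ * R⁻¹ * Hᴴ := by
    rw [hWdef, conjTranspose_mul, conjTranspose_mul, hRiH.eq, Matrix.mul_assoc]
  have hW : Wᴴ * W = Matrix.diagonal (fun i => (σ i : ℂ)) := by
    rw [hWc, hWdef]
    calc Vᴴ * R⁻¹ * Hᴴ * (H * R⁻¹ * V)
        = Vᴴ * (R⁻¹ * (Hᴴ * H) * R⁻¹) * V := by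
          simp only [Matrix.mul_assoc]
      _ = Vᴴ * (V * Matrix.diagonal (fun i => (σ i : ℂ)) * Vᴴ) * V := by rw [hEVD]
      _ = (Vᴴ * V) * Matrix.diagonal (fun i => (σ i : ℂ)) * (Vᴴ * V) := by
          simp only [Matrix.mul_assoc]
      _ = Matrix.diagonal (fun i => (σ i : ℂ)) := by rw [hVhV]; simp
  have hH : H = W * Vᴴ * R := by
    rw [hWdef]
    calc H = H * (R⁻¹ * R) := by rw [hRiR, Matrix.mul_one]
      _ = H * R⁻¹ * (V * Vᴴ) * R := by rw [hVVh]; simp [Matrix.mul_assoc]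
      _ = H * R⁻¹ * V * Vᴴ * R := by simp only [Matrix.mul_assoc]
  have hHc : Hᴴ = R * V * Wᴴ := by
    conv_lhs => rw [hH]
    rw [conjTranspose_mul, conjTranspose_mul, hRH.eq, conjTranspose_conjTranspose,
      Matrix.mul_assoc]
  -- scalar functions
  set sb : Fin n → ℝ := fun i => if σ i = 0 then 0 else max (1 - 1 / σ i) 0 with hsbdef
  set c : Fin n → ℝ := fun i => if 1 < σ i then (σ i - 1) / (σ i)^2 else 0 with hcdef
  set d : Fin n → ℝ := fun i => min (σ i) 1 with hddef
  have f1 : ∀ i, sb i - c i - sb i * σ i * c i = 0 := by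
    intro i
    have hs := hσ i
    simp only [hsbdef, hcdef]
    rcases le_or_gt (σ i) 1 with h | h
    · rw [if_neg (not_lt.mpr h)]
      rcases eq_or_lt_of_le hs with h0 | h0
      · rw [if_pos h0.symm]; ring
      · rw [if_neg h0.ne',
          max_eq_right (by rw [sub_nonpos]; exact (le_div_iff₀ h0).mpr (by linarith))]
        ring
    · rw [if_neg (by positivity : ¬ σ i = 0), if_pos h,
        max_eq_left (by rw [sub_nonneg]; exact div_le_one_of_le₀ (by linarith) (by linarith))]
      field_simp
      ring
  have f2 : ∀ i, σ i - σ i * c i * σ i = d i := by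
    intro i
    simp only [hcdef, hddef]
    rcases le_or_gt (σ i) 1 with h | h
    · rw [if_neg (not_lt.mpr h), min_eq_left h]; ring
    · rw [if_pos h, min_eq_right h.le]
      field_simp
      ring
  have f3 : ∀ i, (1 - d i) * sb i = 0 := by
    intro i
    have hs := hσ i
    simp only [hsbdef, hddef]
    rcases le_or_gt (σ i) 1 with h | h
    · rcases eq_or_lt_of_le hs with h0 | h0
      · rw [if_pos h0.symm]; ring
      · rw [if_neg h0.ne',
          max_eq_right (by rw [sub_nonpos]; exact (le_div_iff₀ h0).mpr (by linarith))]
        ring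
    · rw [min_eq_right h.le]; ring
  have f4 : ∀ i, 0 ≤ sb i := by
    intro i
    simp only [hsbdef]
    split <;> simp [le_max_right]
  have f5 : ∀ i, 0 ≤ 1 - d i := by
    intro i
    simp only [hddef, sub_nonneg]
    exact min_le_right _ _
  -- complex diagonal matrices
  set Dσ := Matrix.diagonal (fun i => (σ i : ℂ)) with hDσdef
  set Sb := Matrix.diagonal (fun i => (sb i : ℂ)) with hSbdef
  set C := Matrix.diagonal (fun i => (c i : ℂ)) with hCdef
  set Dd := Matrix.diagonal (fun i => (d i : ℂ)) with hDddef
  have key1 : Sb - C - Sb * Dσ * C = 0 := by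
    rw [hSbdef, hCdef, hDσdef, diagonal_mul_diagonal, diagonal_mul_diagonal,
      diagonal_sub, diagonal_sub]
    have h0 : (fun i => ((sb i : ℂ) - c i) - (sb i * σ i) * c i) = fun _ => (0:ℂ) :=
      funext fun i => by exact_mod_cast f1 i
    rw [h0, diagonal_zero]
  have f1' : ∀ i, sb i - c i - c i * σ i * sb i = 0 := fun i => by linear_combination f1 i
  have key2 : Sb - C - C * Dσ * Sb = 0 := by
    rw [hSbdef, hCdef, hDσdef, diagonal_mul_diagonal, diagonal_mul_diagonal,
      diagonal_sub, diagonal_sub]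
    have h0 : (fun i => ((sb i : ℂ) - c i) - (c i * σ i) * sb i) = fun _ => (0:ℂ) :=
      funext fun i => by exact_mod_cast f1' i
    rw [h0, diagonal_zero]
  have key3 : Dσ - Dσ * C * Dσ = Dd := by
    rw [hCdef, hDσdef, hDddef, diagonal_mul_diagonal, diagonal_mul_diagonal,
      diagonal_sub]
    have h0 : (fun i => ((σ i : ℂ) - (σ i * c i) * σ i)) = fun i => ((d i : ℝ) : ℂ) :=
      funext fun i => by exact_mod_cast f2 i
    rw [h0]
  have key4 : (1 - Dd) * Sb = 0 := by
    rw [hDddef, hSbdef, ← Matrix.diagonal_one, diagonal_sub, diagonal_mul_diagonal]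
    have h0 : (fun i => ((1:ℂ) - d i) * sb i) = fun _ => (0:ℂ) :=
      funext fun i => by exact_mod_cast f3 i
    rw [h0, diagonal_zero]
  -- cancellation helpers
  have cR : ∀ {p : Type} (P : Matrix (Fin n) p ℂ), R * (R⁻¹ * P) = P := fun P => by
    rw [← Matrix.mul_assoc, hRRi, Matrix.one_mul]
  have cRi : ∀ {p : Type} (P : Matrix (Fin n) p ℂ), R⁻¹ * (R * P) = P := fun P => by
    rw [← Matrix.mul_assoc, hRiR, Matrix.one_mul]
  have cV : ∀ {p : Type} (P : Matrix (Fin n) p ℂ), V * (Vᴴ * P) = P := fun P => by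
    rw [← Matrix.mul_assoc, hVVh, Matrix.one_mul]
  have cVh : ∀ {p : Type} (P : Matrix (Fin n) p ℂ), Vᴴ * (V * P) = P := fun P => by
    rw [← Matrix.mul_assoc, hVhV, Matrix.one_mul]
  have hWmid : ∀ {p : Type} (P : Matrix (Fin n) p ℂ), Wᴴ * (W * P) = Dσ * P := fun P => by
    rw [← Matrix.mul_assoc, hW]
  -- A and its inverse
  have hAAinv : (1 + W * Sb * Wᴴ) * (1 - W * C * Wᴴ) = 1 := by
    have expand : (1 + W * Sb * Wᴴ) * (1 - W * C * Wᴴ)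
        = 1 + W * ((Sb - C - Sb * Dσ * C) * Wᴴ) := by
      simp only [Matrix.mul_sub, Matrix.add_mul, Matrix.sub_mul, Matrix.mul_one,
        Matrix.one_mul, Matrix.mul_assoc, hWmid]
      abel
    rw [expand, key1, Matrix.zero_mul, Matrix.mul_zero, add_zero]
  have hAinvA : (1 - W * C * Wᴴ) * (1 + W * Sb * Wᴴ) = 1 := by
    have expand : (1 - W * C * Wᴴ) * (1 + W * Sb * Wᴴ)
        = 1 + W * ((Sb - C - C * Dσ * Sb) * Wᴴ) := by
      simp only [Matrix.mul_sub, Matrix.add_mul, Matrix.sub_mul, Matrix.mul_add,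
        Matrix.mul_one, Matrix.one_mul, Matrix.mul_assoc, hWmid]
      abel
    rw [expand, key2, Matrix.zero_mul, Matrix.mul_zero, add_zero]
  have hWAW : Wᴴ * (1 - W * C * Wᴴ) * W = Dd := by
    simp only [Matrix.mul_sub, Matrix.sub_mul, Matrix.mul_one, Matrix.one_mul,
      Matrix.mul_assoc, hWmid, hW]
    rw [← Matrix.mul_assoc]
    exact key3
  -- PSD facts
  have hSbPSD : Sb.PosSemidef := by
    rw [hSbdef]
    exact Matrix.PosSemidef.diagonal
      (fun i => by show (0:ℂ) ≤ ((sb i : ℝ) : ℂ); exact_mod_cast f4 i)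
  have hXsPSD : Xstar.PosSemidef := by
    rw [hXstar]
    have h := hSbPSD.conjTranspose_mul_mul_same (Vᴴ * R⁻¹)
    rw [conjTranspose_mul, conjTranspose_conjTranspose, hRiH.eq] at h
    simp only [Matrix.mul_assoc] at h ⊢
    exact h
  have hXsHXs : H * Xstar * Hᴴ = W * Sb * Wᴴ := by
    rw [hXstar, hHc, hH]
    simp only [Matrix.mul_assoc, cR, cRi, cV, cVh]
  have hA2 : 1 + H * Xstar * Hᴴ = 1 + W * Sb * Wᴴ := by rw [hXsHXs]
  have hApd : (1 + H * Xstar * Hᴴ).PosDef :=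
    Matrix.PosDef.one.add_posSemidef (hXsPSD.mul_mul_conjTranspose_same H)
  have hAinv_eq : (1 + H * Xstar * Hᴴ)⁻¹ = 1 - W * C * Wᴴ := by
    apply inv_eq_right_inv
    rw [hA2]
    exact hAAinv
  have hWAW' : ∀ {p : Type} (P : Matrix (Fin n) p ℂ),
      Wᴴ * ((1 - W * (C * Wᴴ)) * (W * P)) = Dd * P := fun P => by
    calc Wᴴ * ((1 - W * (C * Wᴴ)) * (W * P)) = (Wᴴ * (1 - W * C * Wᴴ) * W) * P := by
          simp only [Matrix.mul_assoc]
      _ = Dd * P := by rw [hWAW]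
  have hHAinvH : Hᴴ * (1 - W * C * Wᴴ) * H = R * V * Dd * Vᴴ * R := by
    rw [hHc, hH]
    simp only [Matrix.mul_assoc, hWAW']
  have hPhiG : Φ - Hᴴ * (1 - W * C * Wᴴ) * H = R * V * ((1 - Dd) * (Vᴴ * R)) := by
    rw [hHAinvH, ← hRR]
    simp only [Matrix.sub_mul, Matrix.one_mul, Matrix.mul_sub, Matrix.mul_assoc, cV]
  have hGpsd : (Φ - Hᴴ * (1 - W * C * Wᴴ) * H).PosSemidef := by
    rw [hPhiG]
    have hDpsd : ((1 : Matrix (Fin n) (Fin n) ℂ) - Dd).PosSemidef := by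
      rw [hDddef, ← Matrix.diagonal_one, diagonal_sub]
      exact Matrix.PosSemidef.diagonal
        (fun i => by show (0:ℂ) ≤ 1 - ((d i : ℝ) : ℂ); exact_mod_cast f5 i)
    have h := hDpsd.conjTranspose_mul_mul_same (Vᴴ * R)
    rw [conjTranspose_mul, conjTranspose_conjTranspose, hRH.eq] at h
    simp only [Matrix.mul_assoc] at h ⊢
    exact h
  have key4' : ∀ {p : Type} (P : Matrix (Fin n) p ℂ), (1 - Dd) * (Sb * P) = 0 := fun P => by
    rw [← Matrix.mul_assoc, key4, Matrix.zero_mul]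
  have hGXs : (Φ - Hᴴ * (1 - W * C * Wᴴ) * H) * Xstar = 0 := by
    rw [hPhiG, hXstar]
    simp only [Matrix.mul_assoc, cR, cRi, cV, cVh, key4', Matrix.mul_zero]
  -- main argument
  intro X hX
  have hBpd : (1 + H * X * Hᴴ).PosDef :=
    Matrix.PosDef.one.add_posSemidef (hX.mul_mul_conjTranspose_same H)
  have main := logdet_ineq hApd hBpd
  have hBA : (1 + H * X * Hᴴ) - (1 + H * Xstar * Hᴴ) = H * (X - Xstar) * Hᴴ := by
    rw [Matrix.mul_sub, Matrix.sub_mul]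
    abel
  have htr : (((1 + H * Xstar * Hᴴ)⁻¹ * ((1 + H * X * Hᴴ) - (1 + H * Xstar * Hᴴ))).trace)
      = ((Hᴴ * (1 - W * C * Wᴴ) * H) * (X - Xstar)).trace := by
    rw [hAinv_eq, hBA]
    calc ((1 - W * C * Wᴴ) * (H * (X - Xstar) * Hᴴ)).trace
        = (((1 - W * C * Wᴴ) * (H * (X - Xstar))) * Hᴴ).trace := by
          simp only [Matrix.mul_assoc]
      _ = (Hᴴ * ((1 - W * C * Wᴴ) * (H * (X - Xstar)))).trace := trace_mul_comm _ _
      _ = _ := by simp only [Matrix.mul_assoc]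
  set G := Φ - Hᴴ * (1 - W * C * Wᴴ) * H with hGdef
  have hsplit : (Hᴴ * (1 - W * C * Wᴴ) * H) * (X - Xstar) = Φ * X - Φ * Xstar - G * X := by
    have hfg : Hᴴ * (1 - W * C * Wᴴ) * H = Φ - G := by rw [hGdef]; abel
    rw [hfg, Matrix.sub_mul, Matrix.mul_sub, Matrix.mul_sub, hGXs]
    abel
  have hGX := psd_trace_mul_re_nonneg hGpsd hX
  have htr_re : (((1 + H * Xstar * Hᴴ)⁻¹ *
        ((1 + H * X * Hᴴ) - (1 + H * Xstar * Hᴴ))).trace).re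
      = (Φ * X).trace.re - (Φ * Xstar).trace.re - (G * X).trace.re := by
    rw [htr, hsplit, trace_sub, trace_sub, Complex.sub_re, Complex.sub_re]
  rw [htr_re] at main
  linarith
end
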